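/- Let B = E⁺ ⊕ E⁻ be a Banach space and L: E⁺ → E⁻ a bounded operator with ‖L‖ ≤ 1. Let F = graph(L) and Φ = Id + L: E⁺ → F. Then for any subspace W ⊆ F, the Hausdorff distance between unit spheres satisfies d̂(Φ⁻¹(W), W) ≤ 4‖L‖. -/

import Mathlib

open Metric

variable {B : Type*} [NormedAddCommGroup B] [NormedSpace ℝ B]

/-- The unit sphere of a subspace. -/
def unitSph (E : Submodule ℝ B) : Set B := {v : B | v ∈ E ∧ ‖v‖ = 1}

/-- `dist(E,F) = sup_{v ∈ S_E} dist(v, S_F)`. -/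
noncomputable def distSphOne (E F : Submodule ℝ B) : ℝ :=
  sSup {r : ℝ | ∃ v ∈ unitSph E, r = infDist v (unitSph F)}

/-- The Hausdorff distance between unit spheres `d̂(E,F)`. -/
noncomputable def distSphHat (E F : Submodule ℝ B) : ℝ :=
  max (distSphOne E F) (distSphOne F E)

lemma dist_normalize_le {v w : B} (hv : ‖v‖ = 1) (hw : w ≠ 0) :
    dist v (‖w‖⁻¹ • w) ≤ 2 * ‖v - w‖ := by
  have hwn : ‖w‖ ≠ 0 := norm_ne_zero_iff.mpr hw
  have h1 : w - ‖w‖⁻¹ • w = (1 - ‖w‖⁻¹) • w := by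
    rw [sub_smul, one_smul]
  have h2 : ‖w - ‖w‖⁻¹ • w‖ = |‖w‖ - 1| := by
    rw [h1, norm_smul, Real.norm_eq_abs, ← abs_of_nonneg (norm_nonneg w), ← abs_mul]
    congr 1
    field_simp
    rw [abs_of_nonneg (norm_nonneg w)]; ring
  have h3 : |‖w‖ - 1| ≤ ‖v - w‖ := by
    rw [← hv, abs_sub_comm]
    exact (abs_norm_sub_norm_le v w)
  calc dist v (‖w‖⁻¹ • w) ≤ dist v w + dist w (‖w‖⁻¹ • w) := dist_triangle _ _ _
    _ = ‖v - w‖ + ‖w - ‖w‖⁻¹ • w‖ := by rw [dist_eq_norm, dist_eq_norm]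
    _ ≤ ‖v - w‖ + ‖v - w‖ := by rw [h2]; linarith
    _ = 2 * ‖v - w‖ := by ring

lemma normalize_mem_unitSph {E : Submodule ℝ B} {w : B} (hw : w ∈ E) (hw0 : w ≠ 0) :
    ‖w‖⁻¹ • w ∈ unitSph E := by
  have hwn : ‖w‖ ≠ 0 := norm_ne_zero_iff.mpr hw0
  refine ⟨E.smul_mem _ hw, ?_⟩
  rw [norm_smul, Real.norm_eq_abs, abs_of_nonneg (inv_nonneg.mpr (norm_nonneg w)),
    inv_mul_cancel₀ hwn]

/-- If `F = graph(L)` with `‖L‖ < 1/2` and `Φ = Id + L : E⁺ → F`, then for any subspace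
`W ⊆ F` one has `d̂(Φ⁻¹(W), W) ≤ 4‖L‖`. -/
theorem graph_pullback_dist [CompleteSpace B]
    (Ep Em : Submodule ℝ B) (hcompl : IsCompl Ep Em)
    (hEpc : IsClosed (Ep : Set B)) (hEmc : IsClosed (Em : Set B))
    (L : Ep →L[ℝ] Em) (hL : ‖L‖ < 1 / 2)
    (F W W' : Submodule ℝ B)
    (hF : ∀ w : B, w ∈ F ↔ ∃ u : Ep, w = (u : B) + (L u : B))
    (hWF : W ≤ F)
    (hW' : ∀ v : B, v ∈ W' ↔ ∃ u : Ep, ((u : B) + (L u : B)) ∈ W ∧ v = (u : B)) :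
    distSphHat W' W ≤ 4 * ‖L‖ := by
  have hLnn : (0:ℝ) ≤ ‖L‖ := norm_nonneg L
  have hbnd : (0:ℝ) ≤ 4 * ‖L‖ := by linarith
  refine max_le ?_ ?_
  · -- direction W' → W
    refine Real.sSup_le ?_ hbnd
    rintro r ⟨v, ⟨hvW', hv1⟩, rfl⟩
    obtain ⟨u, huW, rfl⟩ := (hW' v).mp hvW'
    set w : B := (u : B) + (L u : B) with hwdef
    have hdiff : ‖(u : B) - w‖ = ‖(L u : B)‖ := by
      rw [hwdef]; rw [show (u:B) - ((u:B) + (L u : B)) = -(L u : B) by abel, norm_neg]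
    have hu1 : ‖u‖ = 1 := hv1
    have hLu : ‖(L u : B)‖ ≤ ‖L‖ := by
      calc ‖(L u : B)‖ = ‖L u‖ := rfl
        _ ≤ ‖L‖ * ‖u‖ := L.le_opNorm u
        _ = ‖L‖ := by rw [hu1, mul_one]
    have hw0 : w ≠ 0 := by
      intro h0
      rw [hwdef] at h0
      have heq : (u : B) = -(L u : B) := by
        have := eq_neg_of_add_eq_zero_left h0
        exact this
      have hmem : (u : B) ∈ Em := by
        rw [heq]; exact Em.neg_mem (L u).2
      have : (u : B) ∈ Ep ⊓ Em := ⟨u.2, hmem⟩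
      rw [hcompl.inf_eq_bot] at this
      have : (u : B) = 0 := this
      rw [this] at hv1; simp at hv1
    calc infDist (u : B) (unitSph W) ≤ dist (u : B) (‖w‖⁻¹ • w) :=
          infDist_le_dist_of_mem (normalize_mem_unitSph huW hw0)
      _ ≤ 2 * ‖(u : B) - w‖ := dist_normalize_le hv1 hw0
      _ = 2 * ‖(L u : B)‖ := by rw [hdiff]
      _ ≤ 2 * ‖L‖ := by linarith
      _ ≤ 4 * ‖L‖ := by linarith
  · -- direction W → W'
    refine Real.sSup_le ?_ hbnd
    rintro r ⟨w, ⟨hwW, hw1⟩, rfl⟩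
    obtain ⟨u, hwu⟩ := (hF w).mp (hWF hwW)
    have huW' : (u : B) ∈ W' := (hW' (u : B)).mpr ⟨u, by rw [← hwu]; exact hwW, rfl⟩
    have hnu : ‖u‖ ≤ 2 := by
      have h1 : ‖u‖ ≤ ‖w‖ + ‖(L u : B)‖ := by
        have : (u : B) = w - (L u : B) := by rw [hwu]; abel
        calc ‖u‖ = ‖(u : B)‖ := rfl
          _ = ‖w - (L u : B)‖ := by rw [this]
          _ ≤ ‖w‖ + ‖(L u : B)‖ := norm_sub_le _ _
      have h2 : ‖(L u : B)‖ ≤ ‖L‖ * ‖u‖ := L.le_opNorm u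
      nlinarith [norm_nonneg u]
    have hdiff : ‖w - (u : B)‖ ≤ 2 * ‖L‖ := by
      calc ‖w - (u : B)‖ = ‖(L u : B)‖ := by rw [hwu]; rw [show (u:B) + (L u:B) - (u:B) = (L u : B) by abel]
        _ ≤ ‖L‖ * ‖u‖ := L.le_opNorm u
        _ ≤ ‖L‖ * 2 := by nlinarith
        _ = 2 * ‖L‖ := by ring
    have hu0 : (u : B) ≠ 0 := by
      intro h0
      have : u = 0 := by exact_mod_cast h0
      rw [this] at hwu
      simp at hwu
      rw [hwu] at hw1; simp at hw1
    calc infDist w (unitSph W') ≤ dist w (‖(u : B)‖⁻¹ • (u : B)) :=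
          infDist_le_dist_of_mem (normalize_mem_unitSph huW' hu0)
      _ ≤ 2 * ‖w - (u : B)‖ := dist_normalize_le hw1 hu0
      _ ≤ 4 * ‖L‖ := by linarith
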